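/- Let $T$ be a bounded operator on a separable Banach space $X$. The bilateral shift $B_T$ is chaotic on $c_0(X,\mathbb{Z})$ if and only if $T$ satisfies the Kitai Criterion with $X_0=Y_0$: there exist a dense subset $X_0\subseteq X$ and a map $S:X_0\to X_0$ such that $T^nx\to0$ and $S^nx\to 0$ for each $x\in X_0$, and $TSx=x$ for each $x\in X_0$. -/

import Mathlib

open Filter Topology ENNReal

section Defs
variable {Y : Type*} [TopologicalSpace Y]

/-- A map is hypercyclic if some point has dense orbit. -/
def Hypercyclic (f : Y → Y) : Prop := ∃ y : Y, Dense (Set.range fun n : ℕ => f^[n] y)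

/-- Topological transitivity. -/
def TopologicallyTransitive (f : Y → Y) : Prop :=
  ∀ U V : Set Y, IsOpen U → IsOpen V → U.Nonempty → V.Nonempty →
    ∃ n : ℕ, (f^[n] '' U ∩ V).Nonempty

/-- Topological mixing: return sets of pairs of non-empty open sets are cofinite. -/
def TopologicallyMixing (f : Y → Y) : Prop :=
  ∀ U V : Set Y, IsOpen U → IsOpen V → U.Nonempty → V.Nonempty →
    ∃ N : ℕ, ∀ n ≥ N, (f^[n] '' U ∩ V).Nonempty

/-- Weak mixing: `f ⊕ f` is hypercyclic. -/
def WeaklyMixing (f : Y → Y) : Prop := Hypercyclic (fun q : Y × Y => (f q.1, f q.2))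

/-- Chaos in the sense of Devaney: hypercyclic with a dense set of periodic points. -/
def Chaotic (f : Y → Y) : Prop :=
  Hypercyclic f ∧ Dense {y : Y | ∃ d : ℕ, 1 ≤ d ∧ f^[d] y = y}

/-- Lower density of a set of natural numbers. -/
noncomputable def lowerDensity (A : Set ℕ) : ℝ :=
  Filter.liminf
    (fun N : ℕ => (∑ n ∈ Finset.range N, Set.indicator A (fun _ => (1 : ℝ)) n) / N)
    Filter.atTop

/-- Frequent hypercyclicity: some orbit visits every non-empty open set along a set of
positive lower density. -/
def FrequentlyHypercyclic (f : Y → Y) : Prop :=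
  ∃ y : Y, ∀ U : Set Y, IsOpen U → U.Nonempty → 0 < lowerDensity {n : ℕ | f^[n] y ∈ U}

end Defs

/-- The `c₀`-sum of a family of normed spaces, realised as a submodule of `lp E ∞`:
those bounded families whose norms tend to `0` along the cofinite filter. -/
noncomputable def c0Sum {ι : Type*} (E : ι → Type*) [∀ i, NormedAddCommGroup (E i)]
    [∀ i, NormedSpace ℝ (E i)] : Submodule ℝ (lp E ∞) where
  carrier := {x | Tendsto (fun i => ‖(x : ∀ i, E i) i‖) cofinite (nhds 0)}
  add_mem' := by
    intro a b ha hb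
    refine squeeze_zero (fun i => norm_nonneg _) (fun i => ?_) (by simpa using ha.add hb)
    simp only [lp.coeFn_add, Pi.add_apply]
    exact norm_add_le _ _
  zero_mem' := by
    simp only [Set.mem_setOf_eq, lp.coeFn_zero, Pi.zero_apply, norm_zero]
    exact tendsto_const_nhds
  smul_mem' := by
    intro c a ha
    have h : Tendsto (fun i => ‖c‖ * ‖(a : ∀ i, E i) i‖) cofinite (nhds 0) := by
      simpa using ha.const_mul ‖c‖
    refine squeeze_zero (fun i => norm_nonneg _) (fun i => ?_) h
    simp only [lp.coeFn_smul, Pi.smul_apply]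
    exact (norm_smul c _).le

/-- The identity, as a continuous linear map between equal members of a family of spaces. -/
def castL (E : ℤ → Type*) [∀ k, NormedAddCommGroup (E k)] [∀ k, NormedSpace ℝ (E k)]
    {j k : ℤ} (h : j = k) : E j →L[ℝ] E k := by
  subst h; exact ContinuousLinearMap.id ℝ (E j)

/-- The composite `T_{j,j+n} = T_{j+1} ∘ ⋯ ∘ T_{j+n} : E (j+n) → E j` (here `T k` denotes
the operator `E (k+1) → E k`). -/
noncomputable def iterComp {E : ℤ → Type*} [∀ k, NormedAddCommGroup (E k)]
    [∀ k, NormedSpace ℝ (E k)] (T : ∀ k : ℤ, E (k + 1) →L[ℝ] E k) :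
    ∀ (j : ℤ) (n : ℕ), E (j + n) →L[ℝ] E j
  | j, 0 => castL E (by simp)
  | j, (n + 1) => (iterComp T j n).comp ((T (j + n)).comp (castL E (by push_cast; ring)))

set_option linter.unusedSectionVars false
set_option maxHeartbeats 2000000

section Stmt15Aux
variable {X : Type*} [NormedAddCommGroup X] [NormedSpace ℝ X]
end Stmt15Aux

namespace Stmt15

variable {X : Type*} [NormedAddCommGroup X] [NormedSpace ℝ X]

def ap (z : c0Sum (fun _ : ℤ => X)) (n : ℤ) : X :=
  ((z : lp (fun _ : ℤ => X) ∞) : ℤ → X) n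

lemma tendsto_ap (z : c0Sum (fun _ : ℤ => X)) :
    Tendsto (fun i => ‖ap z i‖) cofinite (nhds 0) := z.2

@[simp] lemma ap_add (z w : c0Sum (fun _ : ℤ => X)) (n : ℤ) :
    ap (z + w) n = ap z n + ap w n := rfl

@[simp] lemma ap_sub (z w : c0Sum (fun _ : ℤ => X)) (n : ℤ) :
    ap (z - w) n = ap z n - ap w n := rfl

@[simp] lemma ap_zero' (n : ℤ) : ap (0 : c0Sum (fun _ : ℤ => X)) n = 0 := rfl

lemma norm_ap_le (z : c0Sum (fun _ : ℤ => X)) (n : ℤ) : ‖ap z n‖ ≤ ‖z‖ :=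
  lp.norm_apply_le_norm ENNReal.top_ne_zero (z : lp (fun _ : ℤ => X) ∞) n

lemma norm_le_of_ap {z : c0Sum (fun _ : ℤ => X)} {C : ℝ} (hC : 0 ≤ C)
    (h : ∀ n, ‖ap z n‖ ≤ C) : ‖z‖ ≤ C :=
  lp.norm_le_of_forall_le hC h

lemma c0_ext {z w : c0Sum (fun _ : ℤ => X)} (h : ∀ n, ap z n = ap w n) : z = w := by
  apply Subtype.ext
  apply lp.ext
  funext n
  exact h n

lemma memℓp_of_c0 (f : ℤ → X) (h : Tendsto (fun i => ‖f i‖) cofinite (nhds 0)) :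
    Memℓp f ∞ := by
  rw [memℓp_infty_iff]
  have hfin : {i : ℤ | ¬ ‖f i‖ < 1}.Finite := by
    have := h.eventually (eventually_lt_nhds one_pos)
    exact eventually_cofinite.mp this
  refine ⟨1 + hfin.toFinset.sum (fun i => ‖f i‖), ?_⟩
  rintro r ⟨i, rfl⟩
  by_cases hi : ‖f i‖ < 1
  · have : (0:ℝ) ≤ hfin.toFinset.sum (fun i => ‖f i‖) :=
      Finset.sum_nonneg fun _ _ => norm_nonneg _
    linarith
  · have hmem : i ∈ hfin.toFinset := by simpa using hi
    have := Finset.single_le_sum (f := fun i => ‖f i‖) (fun _ _ => norm_nonneg _) hmem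
    linarith

def mk (f : ℤ → X) (h : Tendsto (fun i => ‖f i‖) cofinite (nhds 0)) :
    c0Sum (fun _ : ℤ => X) := ⟨⟨f, memℓp_of_c0 f h⟩, h⟩

@[simp] lemma ap_mk (f : ℤ → X) (h) (n : ℤ) : ap (mk f h) n = f n := rfl

noncomputable def sing (i : ℤ) (a : X) : c0Sum (fun _ : ℤ => X) :=
  mk (fun j => if j = i then a else 0) (by
    apply Tendsto.congr' (f₁ := fun _ => (0:ℝ))
    · rw [EventuallyEq, eventually_cofinite]
      apply Set.Finite.subset (Set.finite_singleton i)
      intro j hj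
      simp only [Set.mem_setOf_eq] at hj
      by_contra hji
      simp only [Set.mem_singleton_iff] at hji
      exact hj (by simp [if_neg hji])
    · exact tendsto_const_nhds)

@[simp] lemma ap_sing (i : ℤ) (a : X) (j : ℤ) :
    ap (sing i a) j = if j = i then a else 0 := rfl

lemma ap_sum {ι : Type*} (s : Finset ι) (f : ι → c0Sum (fun _ : ℤ => X)) (n : ℤ) :
    ap (∑ i ∈ s, f i) n = ∑ i ∈ s, ap (f i) n := by
  classical
  induction s using Finset.induction with
  | empty => simp
  | insert a s hi ih => rw [Finset.sum_insert hi, Finset.sum_insert hi, ap_add, ih]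

lemma ap_sum_sing (F : Finset ℤ) (φ : ℤ → X) (m : ℤ) :
    ap (∑ i ∈ F, sing i (φ i)) m = if m ∈ F then φ m else 0 := by
  classical
  rw [ap_sum]
  simp only [ap_sing]
  exact Finset.sum_ite_eq F m φ

lemma ap_sum_sing_shift (G : Finset ℤ) (ψ : ℤ → X) (n : ℤ) (m : ℤ) :
    ap (∑ j ∈ G, sing (j + n) (ψ j)) m = if m - n ∈ G then ψ (m - n) else 0 := by
  classical
  rw [ap_sum]
  simp only [ap_sing]
  have h : ∀ j ∈ G, (if m = j + n then ψ j else 0) = (if m - n = j then ψ j else 0) := by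
    intro j _
    have : (m = j + n) ↔ (m - n = j) := by omega
    simp only [this]
  rw [Finset.sum_congr rfl h]
  exact Finset.sum_ite_eq G (m - n) ψ

/-- finite criterion for membership of c₀ -/
lemma tendsto_cofinite_norm_iff {f : ℤ → X} :
    Tendsto (fun i => ‖f i‖) cofinite (nhds 0) ↔ ∀ ε : ℝ, 0 < ε → {i : ℤ | ε ≤ ‖f i‖}.Finite := by
  constructor
  · intro h ε hε
    have := eventually_cofinite.mp (h.eventually (eventually_lt_nhds hε))
    apply this.subset
    intro i hi
    simp only [Set.mem_setOf_eq] at hi ⊢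
    linarith
  · intro h
    rw [Metric.tendsto_nhds]
    intro ε hε
    rw [eventually_cofinite]
    apply (h ε hε).subset
    intro i hi
    simp only [Set.mem_setOf_eq, Real.dist_eq, sub_zero, not_lt] at hi
    simp only [Set.mem_setOf_eq]
    calc ε ≤ |‖f i‖| := hi
      _ = ‖f i‖ := abs_of_nonneg (norm_nonneg _)

/-- `c0Sum` is closed in `lp E ∞`. -/
lemma isClosed_c0Sum :
    IsClosed ((c0Sum (fun _ : ℤ => X) : Submodule ℝ (lp (fun _ : ℤ => X) ∞)) :
      Set (lp (fun _ : ℤ => X) ∞)) := by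
  apply isClosed_of_closure_subset
  intro x hx
  show Tendsto (fun i => ‖(x : ∀ _ : ℤ, X) i‖) cofinite (nhds 0)
  rw [tendsto_cofinite_norm_iff]
  intro ε hε
  obtain ⟨y, hy, hxy⟩ := Metric.mem_closure_iff.mp hx (ε/2) (by linarith)
  have hyt : Tendsto (fun i => ‖(y : ∀ _ : ℤ, X) i‖) cofinite (nhds 0) := hy
  have hfin := (tendsto_cofinite_norm_iff.mp hyt) (ε/2) (by linarith)
  apply hfin.subset
  intro i hi
  simp only [Set.mem_setOf_eq] at hi ⊢
  have h1 : ‖(x : ∀ _ : ℤ, X) i - (y : ∀ _ : ℤ, X) i‖ ≤ ‖x - y‖ := by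
    have := lp.norm_apply_le_norm (E := fun _ : ℤ => X) ENNReal.top_ne_zero (x - y) i
    simpa using this
  have h2 : ‖x - y‖ < ε/2 := by
    rw [← dist_eq_norm]
    exact hxy
  have h3 : ‖(x : ∀ _ : ℤ, X) i‖ ≤ ‖(x : ∀ _ : ℤ, X) i - (y : ∀ _ : ℤ, X) i‖ + ‖(y : ∀ _ : ℤ, X) i‖ := by
    calc ‖(x : ∀ _ : ℤ, X) i‖ = ‖((x : ∀ _ : ℤ, X) i - (y : ∀ _ : ℤ, X) i) + (y : ∀ _ : ℤ, X) i‖ := by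
          rw [sub_add_cancel]
      _ ≤ _ := norm_add_le _ _
  linarith

/-- approximation by finitely supported elements with entries in a dense set -/
lemma approx_finsupp (D : Set X) (hD : Dense D) (z : c0Sum (fun _ : ℤ => X))
    {ε : ℝ} (hε : 0 < ε) :
    ∃ (F : Finset ℤ) (φ : ℤ → X), (∀ i, φ i ∈ D) ∧
      dist (∑ i ∈ F, sing i (φ i)) z < ε := by
  classical
  have hφ : ∀ i : ℤ, ∃ c ∈ D, ‖c - ap z i‖ < ε/3 := by
    intro i
    obtain ⟨c, hc1, hc2⟩ := Metric.dense_iff.mp hD (ap z i) (ε/3) (by linarith)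
    exact ⟨c, hc2, by rwa [← dist_eq_norm]⟩
  choose φ hφD hφn using hφ
  have hfin := (tendsto_cofinite_norm_iff.mp (tendsto_ap z)) (ε/3) (by linarith)
  refine ⟨hfin.toFinset, φ, hφD, ?_⟩
  rw [dist_eq_norm]
  have hb : ‖(∑ i ∈ hfin.toFinset, sing i (φ i)) - z‖ ≤ ε/3 := by
    apply norm_le_of_ap (by linarith)
    intro n
    rw [ap_sub, ap_sum_sing]
    by_cases hn : n ∈ hfin.toFinset
    · rw [if_pos hn]
      exact le_of_lt (hφn n)
    · rw [if_neg hn]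
      simp only [zero_sub, norm_neg]
      have : ¬ (ε/3 ≤ ‖ap z n‖) := by simpa using hn
      linarith
  linarith

/-- the c₀-sum over ℤ is separable when X is -/
lemma separable_c0Sum [TopologicalSpace.SeparableSpace X] :
    TopologicalSpace.SeparableSpace (c0Sum (fun _ : ℤ => X)) := by
  classical
  haveI : Nonempty X := ⟨0⟩
  set e : ℕ → X := TopologicalSpace.denseSeq X with he
  have hdense : DenseRange e := TopologicalSpace.denseRange_denseSeq X
  set Φ : (ℤ →₀ ℕ) → c0Sum (fun _ : ℤ => X) :=
    fun σ => ∑ i ∈ σ.support, sing i (e (σ i - 1)) with hΦ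
  refine ⟨⟨Set.range Φ, Set.countable_range Φ, ?_⟩⟩
  rw [Metric.dense_iff]
  intro z r hr
  obtain ⟨F, φ, hφD, hdist⟩ := approx_finsupp (Set.range e) hdense z hr
  choose ψ hψ using fun i => (hφD i)
  set σ : ℤ →₀ ℕ := Finsupp.onFinset F (fun i => if i ∈ F then ψ i + 1 else 0)
    (by intro i hi; by_contra hc; simp [if_neg hc] at hi) with hσ
  have hsupp : σ.support = F := by
    ext i
    simp only [Finsupp.mem_support_iff, hσ, Finsupp.onFinset_apply]
    by_cases hi : i ∈ F <;> simp [hi]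
  have hval : Φ σ = ∑ i ∈ F, sing i (φ i) := by
    rw [hΦ]
    simp only []
    rw [hsupp]
    apply Finset.sum_congr rfl
    intro i hi
    congr 1
    have : σ i = ψ i + 1 := by simp [hσ, Finsupp.onFinset_apply, if_pos hi]
    rw [this]
    simp [hψ i]
  refine ⟨Φ σ, ?_, ⟨σ, rfl⟩⟩
  rw [Metric.mem_ball, hval]
  exact hdist

/-- Birkhoff transitivity theorem -/
lemma birkhoff {Y : Type*} [TopologicalSpace Y] [SecondCountableTopology Y]
    [BaireSpace Y] [Nonempty Y] (f : Y → Y) (hf : Continuous f)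
    (ht : TopologicallyTransitive f) : Hypercyclic f := by
  classical
  set 𝒷 := {U ∈ TopologicalSpace.countableBasis Y | U.Nonempty} with h𝒷
  set S : Set (Set Y) := (fun U => ⋃ n : ℕ, f^[n] ⁻¹' U) '' 𝒷 with hS
  have hcb : 𝒷.Countable :=
    (TopologicalSpace.countable_countableBasis Y).mono (Set.sep_subset _ _)
  have hSc : S.Countable := hcb.image _
  have hSo : ∀ s ∈ S, IsOpen s := by
    rintro s ⟨U, hU, rfl⟩
    apply isOpen_iUnion
    intro n
    exact (TopologicalSpace.isOpen_of_mem_countableBasis hU.1).preimage (hf.iterate n)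
  have hSd : ∀ s ∈ S, Dense s := by
    rintro s ⟨U, hU, rfl⟩
    rw [dense_iff_inter_open]
    intro V hV hVne
    obtain ⟨n, y, ⟨w, hwV, hwy⟩, hyU⟩ :=
      ht V U hV (TopologicalSpace.isOpen_of_mem_countableBasis hU.1) hVne hU.2
    exact ⟨w, hwV, Set.mem_iUnion.mpr ⟨n, by simp only [Set.mem_preimage, hwy]; exact hyU⟩⟩
  obtain ⟨y, hy⟩ := (dense_sInter_of_isOpen hSo hSc hSd).nonempty
  refine ⟨y, ?_⟩
  rw [dense_iff_inter_open]
  intro V hV hVne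
  obtain ⟨v, hv⟩ := hVne
  obtain ⟨U, hU, hvU, hUV⟩ :=
    (TopologicalSpace.isBasis_countableBasis Y).exists_subset_of_mem_open hv hV
  have hUb : U ∈ 𝒷 := ⟨hU, ⟨v, hvU⟩⟩
  have : y ∈ ⋃ n : ℕ, f^[n] ⁻¹' U := hy _ ⟨U, hUb, rfl⟩
  obtain ⟨n, hn⟩ := Set.mem_iUnion.mp this
  exact ⟨f^[n] y, hUV hn, ⟨n, rfl⟩⟩

lemma B_iter (T : X →L[ℝ] X) (B : c0Sum (fun _ : ℤ => X) →L[ℝ] c0Sum (fun _ : ℤ => X))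
    (hB : ∀ x n, ap (B x) n = T (ap x (n+1))) :
    ∀ (k : ℕ) (z : c0Sum (fun _ : ℤ => X)) (n : ℤ),
      ap ((⇑B)^[k] z) n = (⇑T)^[k] (ap z (n + k)) := by
  intro k
  induction k with
  | zero => intro z n; simp
  | succ k ih =>
    intro z n
    rw [Function.iterate_succ_apply, ih (B z) n, hB z (n + k)]
    have h1 : (n + (k:ℤ)) + 1 = n + ((k:ℕ)+1 : ℕ) := by push_cast; ring
    rw [h1, ← Function.iterate_succ_apply (⇑T)]

lemma Tit0 (T : X →L[ℝ] X) (n : ℕ) : (⇑T)^[n] (0:X) = 0 := by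
  induction n with
  | zero => simp
  | succ n ih => rw [Function.iterate_succ_apply', ih, map_zero]

lemma Sit_mem (X₀ : Set X) (S : X → X) (hSinv : ∀ x ∈ X₀, S x ∈ X₀) :
    ∀ x ∈ X₀, ∀ n : ℕ, S^[n] x ∈ X₀ := by
  intro x hx n
  induction n with
  | zero => simpa
  | succ n ih => rw [Function.iterate_succ_apply']; exact hSinv _ ih

lemma TSit (T : X →L[ℝ] X) (X₀ : Set X) (S : X → X) (hSinv : ∀ x ∈ X₀, S x ∈ X₀)
    (hTS : ∀ x ∈ X₀, T (S x) = x) :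
    ∀ x ∈ X₀, ∀ n : ℕ, (⇑T)^[n] (S^[n] x) = x := by
  intro x hx n
  induction n with
  | zero => simp
  | succ n ih =>
    rw [Function.iterate_succ_apply' S, Function.iterate_succ_apply (⇑T)]
    have h1 : T (S (S^[n] x)) = S^[n] x := hTS _ (Sit_mem X₀ S hSinv x hx n)
    rw [h1, ih]

/-- transitivity of the shift from the Kitai data -/
lemma transitive_B (T : X →L[ℝ] X)
    (B : c0Sum (fun _ : ℤ => X) →L[ℝ] c0Sum (fun _ : ℤ => X))
    (hB : ∀ x n, ap (B x) n = T (ap x (n+1)))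
    (X₀ : Set X) (hX₀ : Dense X₀) (S : X → X)
    (hSinv : ∀ x ∈ X₀, S x ∈ X₀)
    (hprops : ∀ x ∈ X₀,
      Tendsto (fun n : ℕ => (⇑T)^[n] x) atTop (nhds 0)
      ∧ Tendsto (fun n : ℕ => S^[n] x) atTop (nhds 0)
      ∧ T (S x) = x) :
    TopologicallyTransitive (⇑B) := by
  classical
  have hTS : ∀ x ∈ X₀, T (S x) = x := fun x hx => (hprops x hx).2.2
  intro U V hU hV ⟨u, hu⟩ ⟨v, hv⟩
  obtain ⟨r, hr, hballU⟩ := Metric.isOpen_iff.mp hU u hu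
  obtain ⟨s, hs, hballV⟩ := Metric.isOpen_iff.mp hV v hv
  obtain ⟨F, φ, hφ, hdistU⟩ := approx_finsupp X₀ hX₀ u (by linarith : (0:ℝ) < r/2)
  obtain ⟨G, ψ, hψ, hdistV⟩ := approx_finsupp X₀ hX₀ v (by linarith : (0:ℝ) < s/2)
  set w := ∑ i ∈ F, sing i (φ i) with hw
  set v' := ∑ j ∈ G, sing j (ψ j) with hv'
  have hev : ∀ᶠ n : ℕ in atTop,
      (∀ j ∈ F, ‖(⇑T)^[n] (φ j)‖ < s/2) ∧ (∀ j ∈ G, ‖S^[n] (ψ j)‖ < r/2) := by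
    apply Filter.Eventually.and
    · rw [eventually_all_finset]
      intro j hj
      have := (hprops (φ j) (hφ j)).1
      rw [NormedAddCommGroup.tendsto_nhds_zero] at this
      exact this (s/2) (by linarith)
    · rw [eventually_all_finset]
      intro j hj
      have := (hprops (ψ j) (hψ j)).2.1
      rw [NormedAddCommGroup.tendsto_nhds_zero] at this
      exact this (r/2) (by linarith)
  obtain ⟨n, hn1, hn2⟩ := hev.exists
  set z := ∑ j ∈ G, sing (j + (n:ℤ)) (S^[n] (ψ j)) with hz
  have hBadd : ∀ (k : ℕ) (x y : c0Sum (fun _ : ℤ => X)),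
      (⇑B)^[k] (x + y) = (⇑B)^[k] x + (⇑B)^[k] y := by
    intro k
    induction k with
    | zero => intro x y; simp
    | succ k ih =>
      intro x y
      rw [Function.iterate_succ_apply, Function.iterate_succ_apply,
        Function.iterate_succ_apply, map_add, ih]
  have hapz : ∀ m : ℤ, ap z m = if m - n ∈ G then S^[n] (ψ (m - n)) else 0 := by
    intro m
    rw [hz, ap_sum_sing_shift]
  have hBnz : (⇑B)^[n] z = v' := by
    apply c0_ext
    intro m
    rw [B_iter T B hB n z m, hapz (m + n)]
    have h1 : m + (n:ℤ) - (n:ℤ) = m := by ring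
    rw [h1, hv', ap_sum_sing]
    by_cases hm : m ∈ G
    · rw [if_pos hm, if_pos hm]
      exact TSit T X₀ S hSinv hTS (ψ m) (hψ m) n
    · rw [if_neg hm, if_neg hm, Tit0]
  have hznorm : ‖z‖ ≤ r/2 := by
    apply norm_le_of_ap (by linarith)
    intro m
    rw [hapz m]
    by_cases hm : m - n ∈ G
    · rw [if_pos hm]
      exact le_of_lt (hn2 _ hm)
    · rw [if_neg hm]
      simp
      linarith
  have hBnw : ‖(⇑B)^[n] w‖ ≤ s/2 := by
    apply norm_le_of_ap (by linarith)
    intro m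
    rw [B_iter T B hB n w m, hw, ap_sum_sing]
    by_cases hm : m + (n:ℤ) ∈ F
    · rw [if_pos hm]
      exact le_of_lt (hn1 _ hm)
    · rw [if_neg hm, Tit0]
      simp
      linarith
  refine ⟨n, (⇑B)^[n] (w + z), ⟨w + z, ?_, rfl⟩, ?_⟩
  · apply hballU
    rw [Metric.mem_ball]
    calc dist (w + z) u ≤ dist (w + z) w + dist w u := dist_triangle _ _ _
      _ = ‖z‖ + dist w u := by rw [dist_eq_norm, add_sub_cancel_left]
      _ < r/2 + r/2 := add_lt_add_of_le_of_lt hznorm hdistU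
      _ = r := by ring
  · apply hballV
    rw [Metric.mem_ball, hBadd, hBnz]
    calc dist ((⇑B)^[n] w + v') v = ‖(⇑B)^[n] w + v' - v‖ := dist_eq_norm _ _
      _ = ‖(⇑B)^[n] w + (v' - v)‖ := by rw [add_sub_assoc]
      _ ≤ ‖(⇑B)^[n] w‖ + ‖v' - v‖ := norm_add_le _ _
      _ = ‖(⇑B)^[n] w‖ + dist v' v := by rw [dist_eq_norm]
      _ < s/2 + s/2 := add_lt_add_of_le_of_lt hBnw hdistV
      _ = s := by ring

lemma CLM_iter_add (f : X →L[ℝ] X) (k : ℕ) (a b : X) :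
    (⇑f)^[k] (a + b) = (⇑f)^[k] a + (⇑f)^[k] b := by
  induction k with
  | zero => simp
  | succ k ih =>
    rw [Function.iterate_succ_apply', Function.iterate_succ_apply',
      Function.iterate_succ_apply', ih, map_add]

lemma CLM_iter_sum (f : X →L[ℝ] X) (k : ℕ) {ι : Type*} (s : Finset ι) (g : ι → X) :
    (⇑f)^[k] (∑ i ∈ s, g i) = ∑ i ∈ s, (⇑f)^[k] (g i) := by
  classical
  induction s using Finset.induction with
  | empty => simp [Tit0]
  | insert a s hi ih =>
    rw [Finset.sum_insert hi, Finset.sum_insert hi, CLM_iter_add, ih]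

/-- dense periodic points of the shift from the Kitai data -/
lemma periodic_dense (T : X →L[ℝ] X)
    (B : c0Sum (fun _ : ℤ => X) →L[ℝ] c0Sum (fun _ : ℤ => X))
    (hB : ∀ x n, ap (B x) n = T (ap x (n+1)))
    (X₀ : Set X) (hX₀ : Dense X₀) (S : X → X)
    (hSinv : ∀ x ∈ X₀, S x ∈ X₀)
    (hprops : ∀ x ∈ X₀,
      Tendsto (fun n : ℕ => (⇑T)^[n] x) atTop (nhds 0)
      ∧ Tendsto (fun n : ℕ => S^[n] x) atTop (nhds 0)
      ∧ T (S x) = x) :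
    Dense {z : c0Sum (fun _ : ℤ => X) | ∃ d : ℕ, 1 ≤ d ∧ (⇑B)^[d] z = z} := by
  classical
  have hTS : ∀ x ∈ X₀, T (S x) = x := fun x hx => (hprops x hx).2.2
  rw [Metric.dense_iff]
  intro z ε hε
  obtain ⟨F, φ, hφ, hdistw⟩ := approx_finsupp X₀ hX₀ z (by linarith : (0:ℝ) < ε/2)
  set w := ∑ i ∈ F, sing i (φ i) with hw
  set δ := ε / (4 * (F.card + 1)) with hδdef
  have hδ : 0 < δ := by positivity
  -- choose the period d
  have hev : ∀ᶠ m : ℕ in atTop, ∀ j ∈ F,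
      ‖(⇑T)^[m] (φ j)‖ < δ ∧ ‖S^[m] (φ j)‖ < δ := by
    rw [eventually_all_finset]
    intro j hj
    apply Filter.Eventually.and
    · have := (hprops (φ j) (hφ j)).1
      rw [NormedAddCommGroup.tendsto_nhds_zero] at this
      exact this δ hδ
    · have := (hprops (φ j) (hφ j)).2.1
      rw [NormedAddCommGroup.tendsto_nhds_zero] at this
      exact this δ hδ
  obtain ⟨N, hN⟩ := eventually_atTop.mp hev
  set Mb := F.sup (fun j => j.natAbs) with hMb
  set d := max (max N 1) (2*Mb + 1) with hd
  have hd1 : 1 ≤ d := le_trans (le_max_right N 1) (le_max_left _ _)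
  have hdN : N ≤ d := le_trans (le_max_left N 1) (le_max_left _ _)
  have hdM : 2*Mb + 1 ≤ d := le_max_right _ _
  have hdtail : ∀ j ∈ F, ∀ m : ℕ, d ≤ m →
      ‖(⇑T)^[m] (φ j)‖ < δ ∧ ‖S^[m] (φ j)‖ < δ := by
    intro j hj m hm
    exact hN m (le_trans hdN hm) j hj
  -- the chain
  set val : ℤ → X → X := fun k x =>
    if 0 ≤ k then S^[k.toNat * d] x else (⇑T)^[(-k).toNat * d] x with hvaldef
  set χ : ℤ → ℤ → X := fun j nn =>
    if (d:ℤ) ∣ (nn - j) then val ((nn - j)/d) (φ j) else 0 with hχdef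
  have hval0 : ∀ x, val 0 x = x := by
    intro x
    rw [hvaldef]
    simp
  -- step identity
  have hstep : ∀ (k : ℤ) (j : ℤ), j ∈ F → (⇑T)^[d] (val (k+1) (φ j)) = val k (φ j) := by
    intro k j hj
    rcases le_or_gt 0 k with hk | hk
    · have hk1 : (0:ℤ) ≤ k + 1 := by omega
      have ht : (k+1).toNat = k.toNat + 1 := by omega
      rw [hvaldef]
      simp only [if_pos hk, if_pos hk1]
      rw [ht]
      have he : (k.toNat + 1) * d = d + k.toNat * d := by ring
      rw [he, Function.iterate_add_apply]
      exact TSit T X₀ S hSinv hTS (S^[k.toNat * d] (φ j))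
        (Sit_mem X₀ S hSinv (φ j) (hφ j) _) d
    · rcases eq_or_lt_of_le (by omega : k + 1 ≤ 0) with hk1 | hk1
      · -- k = -1
        have hkm : k = -1 := by omega
        rw [hvaldef]
        simp only [hkm]
        norm_num
      · -- k + 1 < 0
        have h1 : ¬ (0:ℤ) ≤ k + 1 := by omega
        have h2 : ¬ (0:ℤ) ≤ k := by omega
        rw [hvaldef]
        simp only [if_neg h1, if_neg h2]
        rw [← Function.iterate_add_apply]
        congr 1
        have ht : (-k).toNat = (-(k+1)).toNat + 1 := by omega
        rw [ht]
        ring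
  -- smallness of off-zero chain values
  have hvalsmall : ∀ (k : ℤ) (j : ℤ), j ∈ F → k ≠ 0 → ‖val k (φ j)‖ < δ := by
    intro k j hj hk
    rcases le_or_gt 0 k with h | h
    · have hk1 : 1 ≤ k.toNat := by omega
      rw [hvaldef]
      simp only [if_pos h]
      exact (hdtail j hj (k.toNat * d) (by nlinarith)).2
    · have hk1 : 1 ≤ (-k).toNat := by omega
      rw [hvaldef]
      simp only [if_neg (by omega : ¬ (0:ℤ) ≤ k)]
      exact (hdtail j hj ((-k).toNat * d) (by nlinarith)).1
  -- membership of the chain in c₀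
  have hχmem : ∀ j ∈ F, Tendsto (fun nn => ‖χ j nn‖) cofinite (nhds 0) := by
    intro j hj
    have hvt : Tendsto (fun k : ℤ => ‖val k (φ j)‖) cofinite (nhds 0) := by
      rw [Int.cofinite_eq, tendsto_sup]
      constructor
      · -- atBot : T-part
        apply Tendsto.congr' (f₁ := fun k : ℤ => ‖(⇑T)^[(-k).toNat * d] (φ j)‖)
        · filter_upwards [eventually_le_atBot (-1 : ℤ)] with k hk
          rw [hvaldef]
          simp only [if_neg (by omega : ¬ (0:ℤ) ≤ k)]
        · have h0 := (hprops (φ j) (hφ j)).1.norm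
          simp only [norm_zero] at h0
          apply h0.comp
          rw [tendsto_atTop]
          intro b
          filter_upwards [eventually_le_atBot (-(b:ℤ))] with k hk
          have : b ≤ (-k).toNat := by omega
          calc b ≤ (-k).toNat := this
            _ ≤ (-k).toNat * d := Nat.le_mul_of_pos_right _ (by omega)
      · -- atTop : S-part
        apply Tendsto.congr' (f₁ := fun k : ℤ => ‖S^[k.toNat * d] (φ j)‖)
        · filter_upwards [eventually_ge_atTop (0 : ℤ)] with k hk
          rw [hvaldef]
          simp only [if_pos hk]
        · have h0 := (hprops (φ j) (hφ j)).2.1.norm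
          simp only [norm_zero] at h0
          apply h0.comp
          rw [tendsto_atTop]
          intro b
          filter_upwards [eventually_ge_atTop ((b:ℤ))] with k hk
          have : b ≤ k.toNat := by omega
          calc b ≤ k.toNat := this
            _ ≤ k.toNat * d := Nat.le_mul_of_pos_right _ (by omega)
    rw [tendsto_cofinite_norm_iff] at hvt ⊢
    intro ε' hε'
    have hK := hvt ε' hε'
    apply Set.Finite.subset (hK.image (fun k => j + k * d))
    intro nn hnn
    simp only [Set.mem_setOf_eq] at hnn
    have hne : χ j nn ≠ 0 := by
      intro h0
      rw [h0] at hnn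
      simp at hnn
      linarith
    have hdvd : (d:ℤ) ∣ (nn - j) := by
      by_contra hc
      exact hne (by rw [hχdef]; simp only [if_neg hc])
    refine ⟨(nn - j)/d, ?_, ?_⟩
    · simp only [Set.mem_setOf_eq]
      have : χ j nn = val ((nn - j)/d) (φ j) := by
        rw [hχdef]
        simp only [if_pos hdvd]
      rwa [this] at hnn
    · have h6 := Int.ediv_mul_cancel hdvd
      show j + ((nn - j)/(d:ℤ)) * (d:ℤ) = nn
      omega
  -- assemble the periodic point
  set p := ∑ j ∈ F.attach, mk (χ j.1) (hχmem j.1 j.2) with hp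
  have happ : ∀ nn : ℤ, ap p nn = ∑ j ∈ F, χ j nn := by
    intro nn
    rw [hp, ap_sum]
    rw [← Finset.sum_attach F (fun j => χ j nn)]
    apply Finset.sum_congr rfl
    intro j _
    rfl
  -- periodicity
  have hper : (⇑B)^[d] p = p := by
    apply c0_ext
    intro nn
    rw [B_iter T B hB d p nn, happ, happ]
    rw [CLM_iter_sum]
    apply Finset.sum_congr rfl
    intro j hj
    by_cases hdvd : (d:ℤ) ∣ (nn - j)
    · have hdvd' : (d:ℤ) ∣ (nn + d - j) := by
        obtain ⟨c, hc⟩ := hdvd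
        exact ⟨c + 1, by rw [mul_add]; omega⟩
      have hq : (nn + d - j)/d = (nn - j)/d + 1 := by
        have h1 : nn + (d:ℤ) - j = (nn - j) + 1 * d := by ring
        rw [h1, Int.add_mul_ediv_right _ _ (by omega : (d:ℤ) ≠ 0)]
      have hl : χ j (nn + d) = val ((nn - j)/d + 1) (φ j) := by
        rw [hχdef]
        simp only [if_pos hdvd']
        rw [hq]
      rw [hl, hstep _ j hj]
      rw [hχdef]
      simp only [if_pos hdvd]
    · have hdvd' : ¬ (d:ℤ) ∣ (nn + d - j) := by
        intro hc
        apply hdvd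
        obtain ⟨c, hc⟩ := hc
        exact ⟨c - 1, by rw [mul_sub]; omega⟩
      have hl : χ j (nn + d) = 0 := by rw [hχdef]; simp only [if_neg hdvd']
      have hr : χ j nn = 0 := by rw [hχdef]; simp only [if_neg hdvd]
      rw [hl, hr, Tit0]
  -- distance estimate
  have hcδ : (0:ℝ) ≤ (F.card : ℝ) * δ := mul_nonneg (Nat.cast_nonneg _) hδ.le
  have hclose : ‖p - w‖ ≤ (F.card : ℝ) * δ := by
    apply norm_le_of_ap hcδ
    intro nn
    rw [ap_sub, happ, hw, ap_sum_sing]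
    by_cases hnn : nn ∈ F
    · rw [if_pos hnn]
      have hsplit : ∑ j ∈ F, χ j nn = χ nn nn + ∑ j ∈ F.erase nn, χ j nn :=
        (Finset.add_sum_erase F (fun j => χ j nn) hnn).symm
      have hdiag : χ nn nn = φ nn := by
        rw [hχdef]
        simp only [sub_self]
        rw [if_pos (dvd_zero _)]
        rw [Int.zero_ediv, hval0]
      have hoff : ∀ j ∈ F.erase nn, χ j nn = 0 := by
        intro j hjn
        obtain ⟨hne, hj⟩ := Finset.mem_erase.mp hjn
        rw [hχdef]
        apply if_neg
        intro hdvd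
        have h1 : nn - j ≠ 0 := by
          intro h
          apply hne
          omega
        have h2 : (d:ℤ) ≤ |nn - j| := Int.le_of_dvd (abs_pos.mpr h1) ((dvd_abs _ _).mpr hdvd)
        have h3 : nn.natAbs ≤ Mb := Finset.le_sup (f := fun j : ℤ => j.natAbs) hnn
        have h4 : j.natAbs ≤ Mb := Finset.le_sup (f := fun j : ℤ => j.natAbs) hj
        have h5 : |nn - j| ≤ 2 * Mb := by
          rw [Int.abs_eq_natAbs]
          have := Int.natAbs_sub_le nn j
          omega
        omega
      rw [hsplit, hdiag, Finset.sum_congr rfl hoff]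
      simp only [Finset.sum_const_zero, add_zero, sub_self, norm_zero]
      exact hcδ
    · rw [if_neg hnn, sub_zero]
      have hterm : ∀ j ∈ F, ‖χ j nn‖ ≤ δ := by
        intro j hj
        by_cases hdvd : (d:ℤ) ∣ (nn - j)
        · have hk : (nn - j)/(d:ℤ) ≠ 0 := by
            intro h0
            have h6 := Int.ediv_mul_cancel hdvd
            rw [h0] at h6
            have : nn = j := by omega
            exact hnn (by rwa [this])
          have hx : χ j nn = val ((nn - j)/d) (φ j) := by
            rw [hχdef]; simp only [if_pos hdvd]
          rw [hx]
          exact (hvalsmall _ j hj hk).le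
        · have hx : χ j nn = 0 := by rw [hχdef]; simp only [if_neg hdvd]
          rw [hx]
          simpa using hδ.le
      calc ‖∑ j ∈ F, χ j nn‖ ≤ ∑ j ∈ F, ‖χ j nn‖ := norm_sum_le _ _
        _ ≤ ∑ _j ∈ F, δ := Finset.sum_le_sum hterm
        _ = (F.card : ℝ) * δ := by rw [Finset.sum_const, nsmul_eq_mul]
  -- conclude
  have hc1 : (0:ℝ) < (F.card:ℝ) + 1 := by
    have := Nat.cast_nonneg (α := ℝ) F.card
    linarith
  have hcard : (F.card : ℝ) * δ ≤ ε / 4 := by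
    calc (F.card:ℝ) * δ ≤ ((F.card:ℝ) + 1) * δ :=
          mul_le_mul_of_nonneg_right (by linarith) hδ.le
      _ = ε/4 := by
          rw [hδdef, ← div_div, ← mul_div_assoc]
          exact mul_div_cancel_left₀ _ (ne_of_gt hc1)
  refine ⟨p, ?_, ⟨d, hd1, hper⟩⟩
  rw [Metric.mem_ball]
  have hd2 : dist p w ≤ ε/4 := by
    rw [dist_eq_norm]
    exact le_trans hclose hcard
  calc dist p z ≤ dist p w + dist w z := dist_triangle _ _ _
    _ < ε := by linarith


lemma iter_norm_le (T : X →L[ℝ] X) (j : ℕ) (w : X) :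
    ‖(⇑T)^[j] w‖ ≤ ‖T‖^j * ‖w‖ := by
  induction j with
  | zero => simp
  | succ j ih =>
    rw [Function.iterate_succ_apply']
    calc ‖T ((⇑T)^[j] w)‖ ≤ ‖T‖ * ‖(⇑T)^[j] w‖ := T.le_opNorm _
      _ ≤ ‖T‖ * (‖T‖^j * ‖w‖) := by
          apply mul_le_mul_of_nonneg_left ih (norm_nonneg T)
      _ = ‖T‖^(j+1) * ‖w‖ := by ring

lemma iter_norm_le' (T : X →L[ℝ] X) {j d : ℕ} (hj : j ≤ d) (w : X) :
    ‖(⇑T)^[j] w‖ ≤ (max 1 ‖T‖)^d * ‖w‖ := by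
  calc ‖(⇑T)^[j] w‖ ≤ ‖T‖^j * ‖w‖ := iter_norm_le T j w
    _ ≤ (max 1 ‖T‖)^d * ‖w‖ := by
        apply mul_le_mul_of_nonneg_right _ (norm_nonneg w)
        calc ‖T‖^j ≤ (max 1 ‖T‖)^j :=
              pow_le_pow_left₀ (norm_nonneg T) (le_max_right 1 ‖T‖) j
          _ ≤ (max 1 ‖T‖)^d := pow_le_pow_right₀ (le_max_left 1 ‖T‖) hj

/-- From dense periodic points of the shift, the pointwise-orbit hypothesis on `X`. -/
lemma H_of_periodic (T : X →L[ℝ] X)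
    (B : c0Sum (fun _ : ℤ => X) →L[ℝ] c0Sum (fun _ : ℤ => X))
    (hB : ∀ x n, ap (B x) n = T (ap x (n+1)))
    (hper : Dense {z : c0Sum (fun _ : ℤ => X) | ∃ d : ℕ, 1 ≤ d ∧ (⇑B)^[d] z = z}) :
    ∀ a : X, ∀ ε : ℝ, 0 < ε → ∃ y : X, ‖y - a‖ < ε ∧
      Tendsto (fun n : ℕ => (⇑T)^[n] y) atTop (nhds 0) ∧
      ∃ u : ℕ → X, u 0 = y ∧ (∀ n, T (u (n+1)) = u n) ∧ Tendsto u atTop (nhds 0) := by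
  intro a ε hε
  obtain ⟨p, hp, d, hd1, hpd⟩ :
      ∃ p, p ∈ Metric.ball (sing 0 a) ε ∧ ∃ d : ℕ, 1 ≤ d ∧ (⇑B)^[d] p = p := by
    obtain ⟨p, hp1, hp2⟩ := (Metric.dense_iff.mp hper (sing 0 a) ε hε)
    exact ⟨p, hp1, hp2⟩
  set y := ap p 0 with hy
  set M := (max 1 ‖T‖) with hM
  have hM1 : (1:ℝ) ≤ M := le_max_left _ _
  have hMd : (0:ℝ) < M^d := by positivity
  -- coordinate-periodicity
  have hper1 : ∀ n : ℤ, ap p n = (⇑T)^[d] (ap p (n + d)) := by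
    intro n
    conv_lhs => rw [← hpd]
    exact B_iter T B hB d p n
  -- tail bound
  have htail : ∀ δ : ℝ, 0 < δ → ∃ R : ℕ, ∀ n : ℤ, (R:ℤ) ≤ |n| → ‖ap p n‖ < δ := by
    intro δ hδ
    have hfin : {n : ℤ | ¬ ‖ap p n‖ < δ}.Finite :=
      eventually_cofinite.mp ((tendsto_ap p).eventually (eventually_lt_nhds hδ))
    refine ⟨(hfin.toFinset.sup fun n => n.natAbs) + 1, fun n hn => ?_⟩
    by_contra hcon
    have hmem : n ∈ hfin.toFinset := by simpa using hcon
    have h4 : n.natAbs ≤ hfin.toFinset.sup (fun n => n.natAbs) :=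
      Finset.le_sup (f := fun n : ℤ => n.natAbs) hmem
    have habs : |n| = (n.natAbs : ℤ) := Int.abs_eq_natAbs n
    rw [habs] at hn
    omega
  -- distance to a
  have hya : ‖y - a‖ < ε := by
    have h1 : ‖ap (p - sing 0 a) 0‖ ≤ ‖p - sing 0 a‖ := norm_ap_le _ 0
    rw [ap_sub] at h1
    have h2 : ap (sing 0 a) (0:ℤ) = a := by simp
    rw [h2] at h1
    have h3 : ‖p - sing 0 a‖ = dist p (sing 0 a) := (dist_eq_norm _ _).symm
    rw [h3] at h1
    exact lt_of_le_of_lt h1 (Metric.mem_ball.mp hp)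
  -- B-periodicity of multiples
  have hBmul : ∀ q : ℕ, (⇑B)^[q*d] p = p := by
    intro q
    induction q with
    | zero => simp
    | succ q ih =>
      have : (q+1)*d = q*d + d := by ring
      rw [this, Function.iterate_add_apply, hpd, ih]
  -- T-iterates of y
  have hTy : Tendsto (fun n : ℕ => (⇑T)^[n] y) atTop (nhds 0) := by
    have hrep : ∀ n : ℕ, (⇑T)^[n] y = (⇑T)^[n % d] (ap p ((n % d : ℕ) - (n:ℤ))) := by
      intro n
      have h1 : ap ((⇑B)^[n] p) (-(n:ℤ)) = (⇑T)^[n] y := by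
        rw [B_iter T B hB n p (-(n:ℤ))]
        congr 1
        simp [hy]
      have h2 : (⇑B)^[n] p = (⇑B)^[n % d] p := by
        conv_lhs => rw [show n = n % d + (n/d)*d from (Nat.mod_add_div' n d).symm]
        rw [Function.iterate_add_apply, hBmul]
      rw [h2] at h1
      rw [← h1, B_iter T B hB (n % d) p (-(n:ℤ))]
      congr 1
      ring
    rw [NormedAddCommGroup.tendsto_nhds_zero]
    intro δ hδ
    obtain ⟨R, hR⟩ := htail (δ / M^d) (by positivity)
    rw [eventually_atTop]
    refine ⟨R + d, fun n hn => ?_⟩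
    rw [hrep n]
    calc ‖(⇑T)^[n % d] (ap p ((n % d : ℕ) - (n:ℤ)))‖
        ≤ M^d * ‖ap p ((n % d : ℕ) - (n:ℤ))‖ :=
          iter_norm_le' T (le_of_lt (Nat.mod_lt n hd1)) _
      _ < M^d * (δ / M^d) := by
          apply mul_lt_mul_of_pos_left _ hMd
          apply hR
          have hmod : n % d < d := Nat.mod_lt n hd1
          rw [abs_sub_comm, abs_of_nonneg (by push_cast; omega)]
          push_cast
          omega
      _ = δ := by field_simp
  -- backward orbit
  have hL : ∀ (k j q : ℕ), k ≤ q*d →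
      (⇑T)^[(q+j)*d - k] (ap p (((q+j)*d : ℕ))) = (⇑T)^[q*d - k] (ap p ((q*d : ℕ))) := by
    intro k j q hk
    induction j with
    | zero => simp
    | succ j ih =>
      have he : (q+(j+1))*d - k = ((q+j)*d - k) + d := by
        have : k ≤ (q+j)*d := le_trans hk (Nat.mul_le_mul_right d (by omega))
        have h2 : (q+(j+1))*d = (q+j)*d + d := by ring
        omega
      rw [he, Function.iterate_add_apply]
      have h3 : (⇑T)^[d] (ap p (((q+(j+1))*d : ℕ))) = ap p (((q+j)*d : ℕ)) := by
        have hc : ((((q+(j+1))*d : ℕ)) : ℤ) = (((q+j)*d : ℕ) : ℤ) + (d:ℕ) := by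
          push_cast; ring
        rw [hc, ← hper1]
      rw [h3]
      exact ih
  have hL' : ∀ (k q q' : ℕ), k ≤ q*d → k ≤ q'*d →
      (⇑T)^[q*d - k] (ap p ((q*d : ℕ))) = (⇑T)^[q'*d - k] (ap p ((q'*d : ℕ))) := by
    intro k q q' hq hq'
    rcases le_total q q' with h | h
    · obtain ⟨j, rfl⟩ := Nat.exists_eq_add_of_le h
      exact (hL k j q hq).symm
    · obtain ⟨j, rfl⟩ := Nat.exists_eq_add_of_le h
      exact hL k j q' hq'
  -- the backward orbit
  set Q : ℕ → ℕ := fun k => k / d + 1 with hQ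
  have hQk : ∀ k, k + 1 ≤ Q k * d := by
    intro k
    have h1 : k % d + k / d * d = k := Nat.mod_add_div' k d
    have h2 : k % d < d := Nat.mod_lt k hd1
    have h3 : Q k * d = k / d * d + d := by rw [hQ]; ring
    omega
  set u : ℕ → X := fun k => (⇑T)^[Q k * d - k] (ap p ((Q k * d : ℕ))) with hu
  have hu0 : u 0 = y := by
    have h1 : Q 0 * d = d := by simp [hQ]
    have h2 : u 0 = (⇑T)^[d] (ap p ((d : ℕ))) := by
      rw [hu]
      simp only [h1, Nat.sub_zero]
    rw [h2, hy]
    have := hper1 0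
    rw [this]
    congr 1
    simp
  have huT : ∀ k, T (u (k+1)) = u k := by
    intro k
    have hk1 : k + 1 + 1 ≤ Q (k+1) * d := hQk (k+1)
    have h1 : T (u (k+1)) = (⇑T)^[Q (k+1) * d - k] (ap p ((Q (k+1) * d : ℕ))) := by
      rw [hu]
      simp only []
      rw [← Function.iterate_succ_apply' (⇑T)]
      congr 1
      omega
    rw [h1]
    apply hL' k (Q (k+1)) (Q k) (by omega) (by have := hQk k; omega)
  have huo : Tendsto u atTop (nhds 0) := by
    rw [NormedAddCommGroup.tendsto_nhds_zero]
    intro δ hδ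
    obtain ⟨R, hR⟩ := htail (δ / M^d) (by positivity)
    rw [eventually_atTop]
    refine ⟨R, fun k hk => ?_⟩
    have hexp : Q k * d - k ≤ d := by
      have h1 : k % d + k / d * d = k := Nat.mod_add_div' k d
      have h3 : Q k * d = k / d * d + d := by rw [hQ]; ring
      omega
    calc ‖u k‖ ≤ M^d * ‖ap p ((Q k * d : ℕ))‖ := iter_norm_le' T hexp _
      _ < M^d * (δ / M^d) := by
          apply mul_lt_mul_of_pos_left _ hMd
          apply hR
          have h5 : R ≤ Q k * d := by have := hQk k; omega
          rw [abs_of_nonneg (by positivity : (0:ℤ) ≤ ((Q k * d : ℕ) : ℤ))]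
          exact_mod_cast h5
      _ = δ := by field_simp
  exact ⟨y, hya, hTy, u, hu0, huT, huo⟩


-- iterate of T applied to backward orbit
lemma orbit_iter (T : X →L[ℝ] X) (u : ℕ → X) (hu : ∀ n, T (u (n+1)) = u n) :
    ∀ (a b : ℕ), (⇑T)^[a] (u (b + a)) = u b := by
  intro a
  induction a with
  | zero => simp
  | succ a ih =>
    intro b
    have : (⇑T)^[a+1] (u (b + (a+1))) = (⇑T)^[a] (T (u ((b + a) + 1))) := by
      rw [Function.iterate_succ_apply]
      ring_nf
    rw [this, hu (b + a), ih b]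

/-- From pointwise backward orbits on a dense set, build the Kitai data with a genuine map S.-/
lemma kitai_from_orbits [TopologicalSpace.SeparableSpace X] (T : X →L[ℝ] X)
    (H : ∀ a : X, ∀ ε : ℝ, 0 < ε → ∃ y : X, ‖y - a‖ < ε ∧
      Tendsto (fun n : ℕ => (⇑T)^[n] y) atTop (nhds 0) ∧
      ∃ u : ℕ → X, u 0 = y ∧ (∀ n, T (u (n+1)) = u n) ∧ Tendsto u atTop (nhds 0)) :
    ∃ X₀ : Set X, Dense X₀ ∧ ∃ S : X → X, (∀ x ∈ X₀, S x ∈ X₀) ∧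
      ∀ x ∈ X₀,
        Tendsto (fun n : ℕ => (⇑T)^[n] x) atTop (nhds 0)
        ∧ Tendsto (fun n : ℕ => S^[n] x) atTop (nhds 0)
        ∧ T (S x) = x := by
  classical
  -- countable dense sequence
  haveI : Nonempty X := ⟨0⟩
  set a : ℕ → X := TopologicalSpace.denseSeq X with ha
  have hdense : DenseRange a := TopologicalSpace.denseRange_denseSeq X
  -- choose good points g m near a (unpair m).1 within 1/((unpair m).2+1)
  have key : ∀ m : ℕ, ∃ y : X, ‖y - a m.unpair.1‖ < 1 / (m.unpair.2 + 1) ∧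
      Tendsto (fun n : ℕ => (⇑T)^[n] y) atTop (nhds 0) ∧
      ∃ u : ℕ → X, u 0 = y ∧ (∀ n, T (u (n+1)) = u n) ∧ Tendsto u atTop (nhds 0) := by
    intro m
    exact H _ _ (by positivity)
  choose g hg hgT hgo using key
  choose u hu0 huT huo using hgo
  -- range of g is dense
  have hgdense : DenseRange g := by
    rw [Metric.denseRange_iff]
    intro x r hr
    obtain ⟨i, hi⟩ := Metric.denseRange_iff.mp hdense x (r/2) (by linarith)
    obtain ⟨k, hk⟩ := exists_nat_one_div_lt (ε := r/2) (by linarith)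
    refine ⟨Nat.pair i k, ?_⟩
    have h1 := hg (Nat.pair i k)
    rw [Nat.unpair_pair] at h1
    have : dist (g (Nat.pair i k)) (a i) < r / 2 := by
      rw [dist_eq_norm]
      calc ‖g (Nat.pair i k) - a i‖ < 1 / (k+1) := h1
        _ < r/2 := by exact_mod_cast hk
    calc dist x (g (Nat.pair i k)) ≤ dist x (a i) + dist (a i) (g (Nat.pair i k)) :=
          dist_triangle _ _ _
      _ < r/2 + r/2 := by
          rw [dist_comm (a i)]
          exact add_lt_add hi this
      _ = r := by ring
  -- values of u are nonzero when g m ≠ 0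
  have hTit0 : ∀ n : ℕ, (⇑T)^[n] (0:X) = 0 := by
    intro n
    induction n with
    | zero => simp
    | succ n ih => rw [Function.iterate_succ_apply', ih, map_zero]
  have hune : ∀ m n, g m ≠ 0 → u m n ≠ 0 := by
    intro m n hm h0
    apply hm
    have h1 := orbit_iter T (u m) (huT m) n 0
    rw [Nat.zero_add, h0, hTit0] at h1
    rw [← hu0 m, h1]
  -- last occurrence of the value at index j in thread m
  set last : ℕ → ℕ → ℕ := fun m j => sSup {n | u m n = u m j} with hlastdef
  have hfin : ∀ m j, g m ≠ 0 → {n | u m n = u m j}.Finite := by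
    intro m j hm
    have hv : (0:ℝ) < ‖u m j‖ := norm_pos_iff.mpr (hune m j hm)
    have hev : ∀ᶠ n in atTop, ‖u m n‖ < ‖u m j‖ := by
      have := (huo m).norm
      rw [show ‖(0:X)‖ = 0 by simp] at this
      exact this.eventually (eventually_lt_nhds hv)
    obtain ⟨Nb, hNb⟩ := eventually_atTop.mp hev
    apply Set.Finite.subset (Set.finite_Iio Nb)
    intro n hn
    simp only [Set.mem_setOf_eq] at hn
    by_contra hlt
    simp only [Set.mem_Iio, not_lt] at hlt
    have := hNb n hlt
    rw [hn] at this
    exact lt_irrefl _ this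
  have hlast_mem : ∀ m j, g m ≠ 0 → u m (last m j) = u m j := by
    intro m j hm
    have := Nat.sSup_mem (s := {n | u m n = u m j}) ⟨j, rfl⟩ ((hfin m j hm).bddAbove)
    exact this
  have hlast_ge : ∀ m j, g m ≠ 0 → j ≤ last m j := by
    intro m j hm
    exact le_csSup ((hfin m j hm).bddAbove) rfl
  have hlast_max : ∀ m j n, g m ≠ 0 → u m n = u m j → n ≤ last m j := by
    intro m j n hm hn
    exact le_csSup ((hfin m j hm).bddAbove) hn
  -- the injectivized index sequence
  set N : ℕ → ℕ → ℕ := fun m k => Nat.rec (last m 0) (fun _ prev => last m (prev + 1)) k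
    with hNdef
  set v : ℕ → ℕ → X := fun m k => u m (N m k) with hvdef
  have hN0 : ∀ m, N m 0 = last m 0 := fun m => rfl
  have hNS : ∀ m k, N m (k+1) = last m (N m k + 1) := fun m k => rfl
  have hvap : ∀ m k, v m k = u m (N m k) := fun m k => rfl
  -- basic properties
  have hv0 : ∀ m, g m ≠ 0 → v m 0 = g m := by
    intro m hm
    rw [hvap, hN0, hlast_mem m 0 hm, hu0 m]
  have hvval : ∀ m k, g m ≠ 0 → v m (k+1) = u m (N m k + 1) :=
    fun m k hm => hlast_mem m (N m k + 1) hm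
  have hvT : ∀ m k, g m ≠ 0 → T (v m (k+1)) = v m k := by
    intro m k hm
    rw [hvval m k hm]
    exact huT m (N m k)
  have hNsucc : ∀ m k, g m ≠ 0 → N m k + 1 ≤ N m (k+1) := by
    intro m k hm
    exact hlast_ge m (N m k + 1) hm
  have hNge : ∀ m k, g m ≠ 0 → k ≤ N m k := by
    intro m k hm
    induction k with
    | zero => exact Nat.zero_le _
    | succ k ih => exact le_trans (Nat.succ_le_succ ih) (hNsucc m k hm)
  have hNmax : ∀ m k n, g m ≠ 0 → u m n = v m k → n ≤ N m k := by
    intro m k n hm hn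
    cases k with
    | zero =>
      rw [hN0]
      apply hlast_max m 0 n hm
      rw [hn, hvap, hN0]
      exact hlast_mem m 0 hm
    | succ k =>
      rw [hNS]
      apply hlast_max m (N m k + 1) n hm
      rw [hn]
      exact hvval m k hm
  have hNmono : ∀ m, g m ≠ 0 → StrictMono (N m) := by
    intro m hm
    apply strictMono_nat_of_lt_succ
    intro k
    exact lt_of_lt_of_le (Nat.lt_succ_self _) (hNsucc m k hm)
  have hvinj : ∀ m, g m ≠ 0 → Function.Injective (v m) := by
    intro m hm i j hij
    by_contra hne
    rcases Nat.lt_or_ge i j with h | h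
    · have : N m j ≤ N m i := hNmax m i (N m j) hm (by rw [← hvap m j]; exact hij.symm)
      exact absurd (hNmono m hm h) (not_lt.mpr this)
    · have hji : j < i := lt_of_le_of_ne h (Ne.symm hne)
      have : N m i ≤ N m j := hNmax m j (N m i) hm (by rw [← hvap m i]; exact hij)
      exact absurd (hNmono m hm hji) (not_lt.mpr this)
  have hvtendsto : ∀ m, g m ≠ 0 → Tendsto (v m) atTop (nhds 0) := by
    intro m hm
    apply (huo m).comp
    exact tendsto_atTop_mono (fun k => hNge m k hm) tendsto_id
  have hvne : ∀ m k, g m ≠ 0 → v m k ≠ 0 := fun m k hm => hune m (N m k) hm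
  -- T-iterates of thread values tend to zero
  have hvTit : ∀ m k, g m ≠ 0 →
      Tendsto (fun j : ℕ => (⇑T)^[j] (v m k)) atTop (nhds 0) := by
    intro m k hm
    have hval : ∀ j : ℕ, N m k ≤ j → (⇑T)^[j] (v m k) = (⇑T)^[j - N m k] (g m) := by
      intro j hj
      have h1 : (⇑T)^[N m k] (v m k) = g m := by
        have h2 := orbit_iter T (u m) (huT m) (N m k) 0
        rw [Nat.zero_add] at h2
        rw [hvap, h2, hu0 m]
      calc (⇑T)^[j] (v m k) = (⇑T)^[j - N m k] ((⇑T)^[N m k] (v m k)) := by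
            rw [← Function.iterate_add_apply]
            congr 1
            omega
        _ = (⇑T)^[j - N m k] (g m) := by rw [h1]
    apply Tendsto.congr' (f₁ := fun j => (⇑T)^[j - N m k] (g m))
    · filter_upwards [eventually_ge_atTop (N m k)] with j hj
      exact (hval j hj).symm
    · exact (hgT m).comp (tendsto_atTop_atTop_of_monotone
        (fun a b hab => Nat.sub_le_sub_right hab _)
        (fun b => ⟨b + N m k, by omega⟩))
  -- stabilization of antitone ℕ-sequences
  have stab : ∀ ms : ℕ → ℕ, (∀ k, ms (k+1) ≤ ms k) → ∃ K, ∀ k, K ≤ k → ms k = ms K := by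
    intro ms hms
    have hmono : ∀ i j, i ≤ j → ms j ≤ ms i := by
      intro i j hij
      induction j with
      | zero => simp_all
      | succ j ih =>
        rcases Nat.lt_or_ge i (j+1) with h | h
        · exact le_trans (hms j) (ih (Nat.lt_succ_iff.mp h))
        · have : i = j + 1 := le_antisymm hij h
          rw [this]
    obtain ⟨K, hK⟩ : ∃ K, ms K = sInf (Set.range ms) :=
      (Nat.sInf_mem (s := Set.range ms) ⟨ms 0, 0, rfl⟩)
    refine ⟨K, fun k hk => ?_⟩
    exact le_antisymm (hmono K k hk) (by rw [hK]; exact Nat.sInf_le ⟨k, rfl⟩)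
  -- the canonical section map S
  set P : X → Prop := fun x => x ≠ 0 ∧ ∃ m, g m ≠ 0 ∧ ∃ n, v m n = x with hPdef
  set μ : X → ℕ := fun x => if h : P x then Nat.find h.2 else 0 with hμdef
  set ν : X → ℕ := fun x => if h : P x then Nat.find (Nat.find_spec h.2).2 else 0 with hνdef
  set S : X → X := fun x => if h : P x then v (μ x) (ν x + 1) else 0 with hSdef
  have hμspec : ∀ x, P x → g (μ x) ≠ 0 ∧ v (μ x) (ν x) = x := by
    intro x h
    have h1 : μ x = Nat.find h.2 := dif_pos h
    have h2 : ν x = Nat.find (Nat.find_spec h.2).2 := dif_pos h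
    rw [h1, h2]
    exact ⟨(Nat.find_spec h.2).1, Nat.find_spec (Nat.find_spec h.2).2⟩
  have hμmin : ∀ x, P x → ∀ m, g m ≠ 0 → (∃ n, v m n = x) → μ x ≤ m := by
    intro x h m hm hn
    have h1 : μ x = Nat.find h.2 := dif_pos h
    rw [h1]
    exact Nat.find_min' h.2 ⟨hm, hn⟩
  have hSx : ∀ x, P x → S x = v (μ x) (ν x + 1) := fun x h => dif_pos h
  have hS0 : ∀ x, ¬ P x → S x = 0 := fun x h => dif_neg h
  have hSP : ∀ x, P x → P (S x) := by
    intro x h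
    rw [hSx x h]
    exact ⟨hvne (μ x) (ν x + 1) (hμspec x h).1, μ x, (hμspec x h).1, ν x + 1, rfl⟩
  have hTS : ∀ x, P x → T (S x) = x := by
    intro x h
    rw [hSx x h, hvT _ _ (hμspec x h).1]
    exact (hμspec x h).2
  have hμle : ∀ x, P x → μ (S x) ≤ μ x := by
    intro x h
    exact hμmin (S x) (hSP x h) (μ x) (hμspec x h).1 ⟨ν x + 1, (hSx x h).symm⟩
  have hνsucc : ∀ x, P x → μ (S x) = μ x → ν (S x) = ν x + 1 := by
    intro x h he
    have h1 : v (μ (S x)) (ν (S x)) = S x := (hμspec (S x) (hSP x h)).2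
    have h2 := h1.trans (hSx x h)
    rw [he] at h2
    exact hvinj (μ x) (hμspec x h).1 h2
  -- the S-orbit of a point of P tends to 0
  have hSorbit : ∀ x, P x → Tendsto (fun k : ℕ => S^[k] x) atTop (nhds 0) := by
    intro x hx
    have horb : ∀ k, P (S^[k] x) := by
      intro k
      induction k with
      | zero => exact hx
      | succ k ih => rw [Function.iterate_succ_apply']; exact hSP _ ih
    have hanti : ∀ k, μ (S^[k+1] x) ≤ μ (S^[k] x) := by
      intro k
      rw [Function.iterate_succ_apply']
      exact hμle _ (horb k)
    obtain ⟨K, hK⟩ := stab (fun k => μ (S^[k] x)) hanti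
    have hνlin : ∀ j : ℕ, ν (S^[K+j] x) = ν (S^[K] x) + j := by
      intro j
      induction j with
      | zero => simp
      | succ j ih =>
        have h1 : K + (j + 1) = (K + j) + 1 := by ring
        rw [h1, Function.iterate_succ_apply']
        have hμeq : μ (S (S^[K+j] x)) = μ (S^[K+j] x) := by
          have e : S (S^[K+j] x) = S^[K+(j+1)] x := by
            rw [h1]
            exact (Function.iterate_succ_apply' S (K+j) x).symm
          rw [e, hK (K + (j+1)) (by omega), hK (K + j) (by omega)]
        rw [hνsucc _ (horb (K+j)) hμeq, ih]
        ring
    have hval : ∀ j : ℕ, S^[K+j] x = v (μ (S^[K] x)) (ν (S^[K] x) + j) := by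
      intro j
      have h1 : v (μ (S^[K+j] x)) (ν (S^[K+j] x)) = S^[K+j] x := (hμspec _ (horb (K+j))).2
      rw [hνlin j, hK (K+j) (by omega)] at h1
      exact h1.symm
    apply Tendsto.congr' (f₁ := fun k : ℕ => v (μ (S^[K] x)) (ν (S^[K] x) + (k - K)))
    · filter_upwards [eventually_ge_atTop K] with k hk
      have : k = K + (k - K) := by omega
      rw [this, hval (k - K)]
      congr 1
      omega
    · refine (hvtendsto _ (hμspec _ (horb K)).1).comp ?_
      refine tendsto_atTop_mono (fun k => Nat.le_add_left _ _) ?_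
      exact tendsto_sub_atTop_nat K
  -- assemble
  refine ⟨insert (0:X) {x | P x}, ?_, S, ?_, ?_⟩
  · apply Dense.mono (Set.range_subset_iff.mpr ?_) hgdense
    intro m
    by_cases hm : g m = 0
    · rw [hm]; exact Set.mem_insert _ _
    · exact Set.mem_insert_of_mem _ ⟨hm, m, hm, 0, hv0 m hm⟩
  · intro x hx
    rcases Set.mem_insert_iff.mp hx with h0 | hP
    · have : ¬ P x := by rw [h0, hPdef]; simp
      rw [hS0 x this]
      exact Set.mem_insert _ _
    · exact Set.mem_insert_of_mem _ (hSP x hP)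
  · intro x hx
    rcases Set.mem_insert_iff.mp hx with h0 | hPx
    · subst h0
      have hnP : ¬ P (0:X) := by rw [hPdef]; simp
      have hS00 : S 0 = 0 := hS0 0 hnP
      have hSit : ∀ k : ℕ, S^[k] (0:X) = 0 := by
        intro k
        induction k with
        | zero => simp
        | succ k ih => rw [Function.iterate_succ_apply', ih, hS00]
      refine ⟨?_, ?_, ?_⟩
      · simpa [hTit0] using (tendsto_const_nhds : Tendsto (fun _ : ℕ => (0:X)) atTop (nhds 0))
      · simpa [hSit] using (tendsto_const_nhds : Tendsto (fun _ : ℕ => (0:X)) atTop (nhds 0))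
      · simp [hS00]
    · refine ⟨?_, hSorbit x hPx, hTS x hPx⟩
      have h1 : v (μ x) (ν x) = x := (hμspec x hPx).2
      rw [← h1]
      exact hvTit (μ x) (ν x) (hμspec x hPx).1

end Stmt15

/-- the bilateral shift `B_T` is chaotic on `c₀(X,ℤ)` iff `T` satisfies the
Kitai Criterion with `X₀ = Y₀`: a dense set `X₀` and a map `S : X₀ → X₀` with `T^n x → 0`,
`S^n x → 0` and `TSx = x` for all `x ∈ X₀`. -/
theorem stmt_15 {X : Type*} [NormedAddCommGroup X] [NormedSpace ℝ X] [CompleteSpace X]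
    [TopologicalSpace.SeparableSpace X] (T : X →L[ℝ] X) :
    ∀ B : c0Sum (fun _ : ℤ => X) →L[ℝ] c0Sum (fun _ : ℤ => X),
      (∀ (x : c0Sum (fun _ : ℤ => X)) (n : ℤ),
        ((B x : lp (fun _ : ℤ => X) ∞) : ℤ → X) n
          = T (((x : lp (fun _ : ℤ => X) ∞) : ℤ → X) (n + 1))) →
      (Chaotic ⇑B ↔
        ∃ X₀ : Set X, Dense X₀ ∧ ∃ S : X → X, (∀ x ∈ X₀, S x ∈ X₀) ∧
          ∀ x ∈ X₀,
            Tendsto (fun n : ℕ => (⇑T)^[n] x) atTop (nhds 0)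
            ∧ Tendsto (fun n : ℕ => S^[n] x) atTop (nhds 0)
            ∧ T (S x) = x) := by
  intro B hB
  have hB' : ∀ (x : c0Sum (fun _ : ℤ => X)) (n : ℤ),
      Stmt15.ap (B x) n = T (Stmt15.ap x (n + 1)) := hB
  constructor
  · rintro ⟨_, hper⟩
    exact Stmt15.kitai_from_orbits T (Stmt15.H_of_periodic T B hB' hper)
  · rintro ⟨X₀, hX₀, S, hSinv, hprops⟩
    constructor
    · haveI h1 : CompleteSpace (c0Sum (fun _ : ℤ => X)) :=
        Stmt15.isClosed_c0Sum.completeSpace_coe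
      haveI h2 : TopologicalSpace.SeparableSpace (c0Sum (fun _ : ℤ => X)) :=
        Stmt15.separable_c0Sum
      haveI h3 : SecondCountableTopology (c0Sum (fun _ : ℤ => X)) :=
        UniformSpace.secondCountable_of_separable _
      haveI h4 : Nonempty (c0Sum (fun _ : ℤ => X)) := ⟨0⟩
      haveI h5 : BaireSpace (c0Sum (fun _ : ℤ => X)) := inferInstance
      exact Stmt15.birkhoff (⇑B) B.continuous
        (Stmt15.transitive_B T B hB' X₀ hX₀ S hSinv hprops)
    · exact Stmt15.periodic_dense T B hB' X₀ hX₀ S hSinv hprops
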